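/- A minimal tight IC POVM {Π_j}_{j=0}^{d²-1} on ℂ^d is a generalized SIC if and only if tr(Π_j²) is independent of j, if and only if the purity tr(Π_j²)/tr(Π_j)² is independent of j, if and only if the family is equiangular (tr(Π_j Π_k) is the same for all j ≠ k). -/

import Mathlib

open Matrix ComplexOrder

noncomputable section

abbrev Mat (d : ℕ) := Matrix (Fin d) (Fin d) ℂ

/-- The real vector space of Hermitian `d × d` complex matrices. -/
abbrev HermM (d : ℕ) : Submodule ℝ (Mat d) := selfAdjoint.submodule ℝ (Mat d)

/-- The identity matrix as a Hermitian matrix. -/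
def hermOne (d : ℕ) : HermM d := ⟨1, IsSelfAdjoint.one (Mat d)⟩

/-- The superoperator `|A⟩⟩⟨⟨B| : X ↦ tr(B X) • A` on Hermitian matrices. -/
def outerSO (d : ℕ) (A B : HermM d) : HermM d →ₗ[ℝ] HermM d :=
  (Complex.reLm ∘ₗ Matrix.traceLinearMap (Fin d) ℝ ℂ ∘ₗ
    LinearMap.mulLeft ℝ (B : Mat d) ∘ₗ (HermM d).subtype).smulRight A

set_option linter.unreachableTactic false in
set_option linter.unusedTactic false in
/-- Real decomposition of a complex matrix into Hermitian and anti-Hermitian parts. -/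
def hermDecomp (d : ℕ) : Mat d ≃ₗ[ℝ] (HermM d) × (HermM d) where
  toFun A := (⟨(1/2 : ℝ) • (A + Aᴴ), by
      show star _ = _
      simp [star_smul, Matrix.star_eq_conjTranspose, add_comm]⟩,
    ⟨(1/2 : ℝ) • (Complex.I • (Aᴴ - A)), by
      show star _ = _
      simp [star_smul, Matrix.star_eq_conjTranspose, smul_sub]
      abel⟩)
  invFun X := (X.1 : Mat d) + Complex.I • (X.2 : Mat d)
  map_add' A B := by
    refine Prod.ext (Subtype.ext ?_) (Subtype.ext ?_) <;>
      ext i j <;>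
      simp [Matrix.add_apply, Matrix.smul_apply, Matrix.sub_apply, conjTranspose_apply,
        Complex.ext_iff] <;>
      (try constructor) <;> (first | ring | trivial)
  map_smul' r A := by
    refine Prod.ext (Subtype.ext ?_) (Subtype.ext ?_) <;>
      ext i j <;>
      simp [Matrix.add_apply, Matrix.smul_apply, Matrix.sub_apply, conjTranspose_apply,
        Complex.ext_iff] <;>
      (try constructor) <;> (first | ring | trivial)
  left_inv A := by
    ext i j
    simp [Matrix.add_apply, Matrix.smul_apply, Matrix.sub_apply, conjTranspose_apply,
      Complex.ext_iff]
    constructor <;> ring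
  right_inv X := by
    obtain ⟨⟨X, hX⟩, ⟨Y, hY⟩⟩ := X
    have hX' : Xᴴ = X := hX
    have hY' : Yᴴ = Y := hY
    have hXe : ∀ i j, star (X j i) = X i j := fun i j => congrFun (congrFun hX' i) j
    have hYe : ∀ i j, star (Y j i) = Y i j := fun i j => congrFun (congrFun hY' i) j
    refine Prod.ext (Subtype.ext ?_) (Subtype.ext ?_) <;>
      · dsimp only
        ext i j
        simp [Matrix.add_apply, Matrix.smul_apply, Matrix.sub_apply, conjTranspose_apply,
          star_add, star_smul, hXe, hYe, Complex.ext_iff]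
        constructor <;> ring

theorem finrank_hermM (d : ℕ) : Module.finrank ℝ (HermM d) = d ^ 2 := by
  have h := (hermDecomp d).finrank_eq
  rw [Module.finrank_matrix, Module.finrank_prod, Complex.finrank_real_complex] at h
  simp only [Fintype.card_fin] at h
  rw [pow_two]
  omega

theorem outerSO_apply (d : ℕ) (A B X : HermM d) :
    outerSO d A B X = (Matrix.trace ((B : Mat d) * (X : Mat d))).re • A := rfl

/-- A minimal tight IC POVM is a generalized SIC iff tr(Π_j²) is
independent of j, iff the purity tr(Π_j²)/tr(Π_j)² is independent of j, iff the
family is equiangular. -/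
theorem minimal_tightIC_genSIC_iffs (d : ℕ) (hd : 2 ≤ d)
    (P : Fin (d ^ 2) → HermM d) (α β : ℝ)
    (hpsd : ∀ j, ((P j : Mat d)).PosSemidef)
    (htrpos : ∀ j, 0 < (Matrix.trace (P j : Mat d)).re)
    (hsum : ∑ j, (P j : Mat d) = 1)
    (hIC : ∀ A : Mat d, A.IsHermitian →
      A ∈ Submodule.span ℝ (Set.range fun j => (P j : Mat d)))
    (hα : 0 < α) (hβ : 0 < β)
    (hframe : (d : ℝ) • ∑ j, ((Matrix.trace (P j : Mat d)).re)⁻¹ • outerSO d (P j) (P j) =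
      α • LinearMap.id + β • outerSO d (hermOne d) (hermOne d)) :
    ((∃ α' ζ : ℝ, 0 < α' ∧ ∀ j k,
        Matrix.trace (((d : ℂ) • (P j : Mat d)) * ((d : ℂ) • (P k : Mat d))) =
          if j = k then ((α' : ℂ) + (ζ : ℂ)) else (ζ : ℂ)) ↔
      (∃ s : ℂ, ∀ j, Matrix.trace ((P j : Mat d) * (P j : Mat d)) = s)) ∧
    ((∃ α' ζ : ℝ, 0 < α' ∧ ∀ j k,
        Matrix.trace (((d : ℂ) • (P j : Mat d)) * ((d : ℂ) • (P k : Mat d))) =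
          if j = k then ((α' : ℂ) + (ζ : ℂ)) else (ζ : ℂ)) ↔
      (∃ u : ℝ, ∀ j, (Matrix.trace ((P j : Mat d) * (P j : Mat d))).re /
        (Matrix.trace (P j : Mat d)).re ^ 2 = u)) ∧
    ((∃ α' ζ : ℝ, 0 < α' ∧ ∀ j k,
        Matrix.trace (((d : ℂ) • (P j : Mat d)) * ((d : ℂ) • (P k : Mat d))) =
          if j = k then ((α' : ℂ) + (ζ : ℂ)) else (ζ : ℂ)) ↔
      (∃ z : ℂ, ∀ j k, j ≠ k →
        Matrix.trace ((P j : Mat d) * (P k : Mat d)) = z)) := by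
  have hd0 : (0:ℝ) < (d:ℝ) := by positivity
  have hd0' : (d:ℝ) ≠ 0 := ne_of_gt hd0
  -- linear independence
  have hli : LinearIndependent ℝ P := by
    have hspan : ⊤ ≤ Submodule.span ℝ (Set.range P) := by
      rintro ⟨A, hA⟩ -
      have h1 := hIC A hA
      have h2 : (Set.range fun j => (P j : Mat d)) = (HermM d).subtype '' Set.range P := by
        ext x; simp
      rw [h2, ← Submodule.map_span] at h1
      obtain ⟨x, hx, hxA⟩ := Submodule.mem_map.mp h1
      have : x = ⟨A, hA⟩ := Subtype.ext hxA
      rwa [this] at hx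
    have hcard : Fintype.card (Fin (d^2)) = Module.finrank ℝ (HermM d) := by
      simp [finrank_hermM]
    have hb := coe_basisOfTopLeSpanOfCardEqFinrank P hspan hcard
    rw [← hb]
    exact (basisOfTopLeSpanOfCardEqFinrank P hspan hcard).linearIndependent
  set t : Fin (d^2) → ℝ := fun j => (Matrix.trace (P j : Mat d)).re with ht
  set c : Fin (d^2) → Fin (d^2) → ℝ :=
    fun j k => (Matrix.trace ((P j : Mat d) * (P k : Mat d))).re with hc
  have tpos : ∀ j, 0 < t j := htrpos
  have hone : hermOne d = ∑ j, P j := by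
    apply Subtype.ext
    have : ((∑ j, P j : HermM d) : Mat d) = ∑ j, (P j : Mat d) := by simp
    rw [this, hsum]; rfl
  -- reality of traces
  have treal : ∀ j k, Matrix.trace ((P j : Mat d) * (P k : Mat d)) = ((c j k : ℝ) : ℂ) := by
    intro j k
    have hj : ((P j : Mat d))ᴴ = (P j : Mat d) := (P j).2
    have hk : ((P k : Mat d))ᴴ = (P k : Mat d) := (P k).2
    have hstar : (starRingEnd ℂ) (Matrix.trace ((P j : Mat d) * (P k : Mat d)))
        = Matrix.trace ((P j : Mat d) * (P k : Mat d)) := by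
      have h1 : (((P j : Mat d) * (P k : Mat d))ᴴ).trace
          = star (Matrix.trace ((P j : Mat d) * (P k : Mat d))) :=
        Matrix.trace_conjTranspose _
      rw [conjTranspose_mul, hj, hk, Matrix.trace_mul_comm] at h1
      exact h1.symm
    exact ((Complex.conj_eq_iff_re).mp hstar).symm
  have ttr : ∀ j, Matrix.trace (P j : Mat d) = ((t j : ℝ) : ℂ) := by
    intro j
    have hj : ((P j : Mat d))ᴴ = (P j : Mat d) := (P j).2
    have hstar : (starRingEnd ℂ) (Matrix.trace (P j : Mat d)) = Matrix.trace (P j : Mat d) := by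
      have h1 : (((P j : Mat d))ᴴ).trace = star (Matrix.trace (P j : Mat d)) :=
        Matrix.trace_conjTranspose _
      rw [hj] at h1
      exact h1.symm
    exact ((Complex.conj_eq_iff_re).mp hstar).symm
  -- key identity from the frame condition and linear independence
  have hkey : ∀ j k, (d : ℝ) * (t j)⁻¹ * c j k = (if j = k then α else 0) + β * t k := by
    intro j k
    have hfr := LinearMap.congr_fun hframe (P k)
    simp only [LinearMap.add_apply, LinearMap.smul_apply, LinearMap.sum_apply, LinearMap.id_apply,
      outerSO_apply] at hfr
    have honec : ((hermOne d : HermM d) : Mat d) = (1 : Mat d) := rfl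
    rw [honec, one_mul] at hfr
    have e1 : ∑ i, (((d:ℝ) * (t i)⁻¹ * c i k)) • P i = α • P k + (β * t k) • ∑ i, P i := by
      have l1 : ∑ i, (((d:ℝ) * (t i)⁻¹ * c i k)) • P i
          = (d:ℝ) • ∑ x, (t x)⁻¹ • (((P x : Mat d) * (P k : Mat d)).trace.re • P x) := by
        rw [Finset.smul_sum]
        exact Finset.sum_congr rfl fun i _ => by rw [smul_smul, smul_smul, mul_assoc]
      rw [l1, hfr, hone, smul_smul]
    have e2 : ∑ i, ((if i = k then α else 0) + β * t k) • P i
        = α • P k + (β * t k) • ∑ i, P i := by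
      rw [Finset.sum_congr rfl (fun i _ => add_smul _ _ (P i)), Finset.sum_add_distrib]
      congr 1
      · rw [Finset.sum_eq_single k (fun b _ hb => by simp [hb]) (by simp)]
        simp
      · rw [eq_comm]; exact Finset.smul_sum
    have hz : ∑ i, ((((d:ℝ) * (t i)⁻¹ * c i k)) - ((if i = k then α else 0) + β * t k)) • P i
        = 0 := by
      rw [Finset.sum_congr rfl (fun i _ => sub_smul _ _ (P i)), Finset.sum_sub_distrib, e1, e2,
        sub_self]
    have h3 := Fintype.linearIndependent_iff.mp hli _ hz j
    rwa [sub_eq_zero] at h3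
  have hck : ∀ j k, c j k = t j / d * ((if j = k then α else 0) + β * t k) := by
    intro j k
    rw [← hkey j k]
    have htj := (tpos j).ne'
    field_simp
  -- sum of traces
  have hsumt : ∑ j, t j = d := by
    have h1 : ∑ j, Matrix.trace (P j : Mat d) = (d : ℂ) := by
      rw [← Matrix.trace_sum, hsum, Matrix.trace_one]
      simp
    have h2 := congrArg Complex.re h1
    rw [Complex.re_sum] at h2
    simpa using h2
  -- trace of scaled products
  have hdd : ∀ j k, Matrix.trace (((d : ℂ) • (P j : Mat d)) * ((d : ℂ) • (P k : Mat d)))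
      = (((d:ℝ)^2 * c j k : ℝ) : ℂ) := by
    intro j k
    rw [smul_mul_assoc, mul_smul_comm, Matrix.trace_smul, Matrix.trace_smul, treal]
    simp only [smul_eq_mul]
    push_cast
    ring
  -- injectivity of the diagonal overlap as a function of the trace
  have hinj : ∀ j k, c j j = c k k → t j = t k := by
    intro j k h
    have ej : (d:ℝ) * c j j = t j * (α + β * t j) := by
      have h0 := hck j j
      rw [if_pos rfl] at h0
      rw [h0]
      field_simp
    have ek : (d:ℝ) * c k k = t k * (α + β * t k) := by
      have h0 := hck k k
      rw [if_pos rfl] at h0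
      rw [h0]
      field_simp
    have h2 : (t j - t k) * (α + β * (t j + t k)) = 0 := by
      linear_combination ek - ej + (d:ℝ) * h
    rcases mul_eq_zero.mp h2 with h3 | h3
    · exact sub_eq_zero.mp h3
    · exact absurd h3
        (add_pos hα (mul_pos hβ (add_pos (tpos j) (tpos k)))).ne'
  have EqT_to_tj : (∀ j k, t j = t k) → ∀ j, t j = 1 / d := by
    intro hE j
    have h1 : ∑ k, t k = ∑ _k : Fin (d^2), t j := Finset.sum_congr rfl fun k _ => (hE k j)
    rw [hsumt] at h1
    rw [Finset.sum_const, Finset.card_univ, Fintype.card_fin, nsmul_eq_mul] at h1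
    push_cast at h1
    rw [eq_div_iff hd0']
    apply mul_left_cancel₀ hd0'
    linear_combination -h1
  -- the four conditions are each equivalent to the traces being constant
  have GS_to : (∃ α' ζ : ℝ, 0 < α' ∧ ∀ j k,
        Matrix.trace (((d : ℂ) • (P j : Mat d)) * ((d : ℂ) • (P k : Mat d))) =
          if j = k then ((α' : ℂ) + (ζ : ℂ)) else (ζ : ℂ)) → ∀ j k, t j = t k := by
    rintro ⟨α', ζ, -, hGS⟩ j k
    apply hinj
    have h1 := hGS j j
    have h2 := hGS k k
    rw [hdd, if_pos rfl] at h1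
    rw [hdd, if_pos rfl] at h2
    have h3 := Complex.ofReal_inj.mp (h1.trans h2.symm)
    have hd2 : ((d:ℝ)^2) ≠ 0 := by positivity
    exact mul_left_cancel₀ hd2 h3
  have EqT_to_GS : (∀ j k, t j = t k) → (∃ α' ζ : ℝ, 0 < α' ∧ ∀ j k,
        Matrix.trace (((d : ℂ) • (P j : Mat d)) * ((d : ℂ) • (P k : Mat d))) =
          if j = k then ((α' : ℂ) + (ζ : ℂ)) else (ζ : ℂ)) := by
    intro hE
    refine ⟨α, β / d, hα, fun j k => ?_⟩
    by_cases h : j = k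
    · subst h
      rw [hdd, hck, EqT_to_tj hE j, if_pos rfl, if_pos rfl]
      have he : (d:ℝ)^2 * ((1/d)/d * (α + β*(1/d))) = α + β/d := by field_simp
      rw [he]
      push_cast
      ring
    · rw [hdd, hck, EqT_to_tj hE j, EqT_to_tj hE k, if_neg h, if_neg h]
      have he : (d:ℝ)^2 * ((1/d)/d * (0 + β*(1/d))) = β/d := by field_simp; ring
      rw [he]
  have A_to : (∃ s : ℂ, ∀ j, Matrix.trace ((P j : Mat d) * (P j : Mat d)) = s)
      → ∀ j k, t j = t k := by
    rintro ⟨s, hs⟩ j k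
    apply hinj
    have h1 := (hs j).trans (hs k).symm
    rw [treal, treal] at h1
    exact Complex.ofReal_inj.mp h1
  have EqT_to_A : (∀ j k, t j = t k)
      → ∃ s : ℂ, ∀ j, Matrix.trace ((P j : Mat d) * (P j : Mat d)) = s := by
    intro hE
    refine ⟨(((1/d)/d * (α + β * (1/d)) : ℝ) : ℂ), fun j => ?_⟩
    rw [treal, hck, EqT_to_tj hE j, if_pos rfl]
  have hpur : ∀ j, c j j / (t j)^2 = α / (d * t j) + β / d := by
    intro j
    rw [hck, if_pos rfl]
    have htj := (tpos j).ne'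
    field_simp
  have B_to : (∃ u : ℝ, ∀ j, c j j / (t j) ^ 2 = u) → ∀ j k, t j = t k := by
    rintro ⟨u, hu⟩ j k
    have h1 := (hu j).trans (hu k).symm
    rw [hpur, hpur] at h1
    have h2 : α / (d * t j) = α / (d * t k) := add_right_cancel h1
    have h3 := (div_eq_div_iff (mul_pos hd0 (tpos j)).ne' (mul_pos hd0 (tpos k)).ne').mp h2
    have h4 : (α * (d:ℝ)) * t k = (α * d) * t j := by linear_combination h3
    have h5 : α * (d:ℝ) ≠ 0 := by positivity
    exact (mul_left_cancel₀ h5 h4).symm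
  have EqT_to_B : (∀ j k, t j = t k) → ∃ u : ℝ, ∀ j, c j j / (t j) ^ 2 = u := by
    intro hE
    exact ⟨α / ((d:ℝ) * (1/d)) + β / d, fun j => by rw [hpur j, EqT_to_tj hE j]⟩
  have C_to : (∃ z : ℂ, ∀ j k, j ≠ k → Matrix.trace ((P j : Mat d) * (P k : Mat d)) = z)
      → ∀ j k, t j = t k := by
    rintro ⟨z, hz⟩ k l
    by_cases hkl : k = l
    · rw [hkl]
    · have hne : (({k, l} : Finset (Fin (d^2)))ᶜ).Nonempty := by
        rw [← Finset.card_pos, Finset.card_compl, Fintype.card_fin]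
        have h2 : ({k, l} : Finset (Fin (d^2))).card ≤ 2 :=
          (Finset.card_insert_le _ _).trans (by simp)
        have h4 : 4 ≤ d^2 := by rw [pow_two]; exact Nat.mul_le_mul hd hd
        omega
      obtain ⟨m, hm⟩ := hne
      simp only [Finset.mem_compl, Finset.mem_insert, Finset.mem_singleton, not_or] at hm
      have e1 := hz m k hm.1
      have e2 := hz m l hm.2
      rw [treal] at e1 e2
      have h1 : c m k = c m l := Complex.ofReal_inj.mp (e1.trans e2.symm)
      rw [hck, hck, if_neg hm.1, if_neg hm.2] at h1
      have h2 : t m / (d:ℝ) ≠ 0 := (div_pos (tpos m) hd0).ne'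
      have h3 := mul_left_cancel₀ h2 h1
      have h4 : β * t k = β * t l := by linear_combination h3
      exact mul_left_cancel₀ hβ.ne' h4
  have EqT_to_C : (∀ j k, t j = t k)
      → ∃ z : ℂ, ∀ j k, j ≠ k → Matrix.trace ((P j : Mat d) * (P k : Mat d)) = z := by
    intro hE
    refine ⟨(((1/d)/d * (0 + β * (1/d)) : ℝ) : ℂ), fun j k hjk => ?_⟩
    rw [treal, hck, EqT_to_tj hE j, EqT_to_tj hE k, if_neg hjk]
  exact ⟨⟨fun h => EqT_to_A (GS_to h), fun h => EqT_to_GS (A_to h)⟩,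
    ⟨fun h => EqT_to_B (GS_to h), fun h => EqT_to_GS (B_to h)⟩,
    ⟨fun h => EqT_to_C (GS_to h), fun h => EqT_to_GS (C_to h)⟩⟩
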